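/- Let k ≥ 2 and equip the space of sequences ℕ → Fin k with the infinite product of the uniform probability measure on Fin k. Then the set of sequences S : ℕ → Fin k that are computably unpredictable has measure 1, i.e., almost every sequence S satisfies: for every nonempty proper subset Γ of Fin k and every computable g : ℕ → Bool with {n | g n = true} infinite, the set {n | g n = true ∧ S n ∈ Γ} is infinite. -/

import Mathlib

open MeasureTheory ProbabilityTheory
open scoped ENNReal

lemma countable_setOf_computable : Set.Countable {g : ℕ → Bool | Computable g} := by
  have h : ∀ g : {g : ℕ → Bool // Computable g}, ∃ c : Nat.Partrec.Code,
      c.eval = fun n => Part.some (Encodable.encode (g.1 n)) := by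
    intro g
    obtain ⟨c, hc⟩ := Nat.Partrec.Code.exists_code.mp g.2
    refine ⟨c, ?_⟩
    funext n
    rw [hc]
    simp [Part.bind, PFun.coe_val, Part.assert]
    exact Part.ext' (by simp [Part.some]) (fun _ _ => rfl)
  choose F hF using h
  have hinj : Function.Injective F := by
    intro g1 g2 hfg
    apply Subtype.ext; funext n
    have h1 := congrFun (hF g1) n
    rw [hfg, hF g2] at h1
    exact Encodable.encode_injective (Part.some_injective (h1.symm))
  have : Countable {g : ℕ → Bool // Computable g} := Function.Injective.countable hinj
  exact Set.countable_coe_iff.mp this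

lemma bad_null (k : ℕ) (hk : 2 ≤ k)
    (μ : Measure (ℕ → Fin k)) [IsProbabilityMeasure μ]
    (h_indep : iIndepFun (fun n (S : ℕ → Fin k) => S n) μ)
    (h_unif : ∀ (n : ℕ) (a : Fin k), μ {S | S n = a} = ((k : ENNReal))⁻¹)
    (Γ : Set (Fin k)) (hΓ : Γ.Nonempty) (g : ℕ → Bool)
    (hg : {n | g n = true}.Infinite) :
    μ {S : ℕ → Fin k | {n | g n = true ∧ S n ∈ Γ}.Finite} = 0 := by
  obtain ⟨a₀, ha₀⟩ := hΓ
  set E := hg.natEmbedding with hE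
  set e : ℕ → ℕ := fun m => (E m : ℕ) with he
  have he_inj : Function.Injective e := fun a b h => E.injective (Subtype.ext h)
  have he_g : ∀ m, g (e m) = true := fun m => (E m).2
  set A : ℕ → Set (ℕ → Fin k) := fun m => (fun S : ℕ → Fin k => S (e m)) ⁻¹' Γ with hA
  have hAmeas : ∀ m, MeasurableSet (A m) :=
    fun m => (measurable_pi_apply (e m)) (MeasurableSet.of_discrete)
  have hiIndep : iIndepSet A μ := by
    rw [iIndepSet_iff_meas_biInter hAmeas]
    intro s
    have h2 := (iIndepFun_iff_measure_inter_preimage_eq_mul.mp h_indep) (s.image e)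
      (sets := fun _ => Γ) (fun i _ => MeasurableSet.of_discrete)
    have hbi : (⋂ i ∈ s.image e, (fun S : ℕ → Fin k => S i) ⁻¹' Γ) = ⋂ m ∈ s, A m := by
      simp only [← Finset.mem_coe, Finset.coe_image, Set.biInter_image, hA]
    have hpr : (∏ i ∈ s.image e, μ ((fun S : ℕ → Fin k => S i) ⁻¹' Γ)) = ∏ m ∈ s, μ (A m) := by
      rw [Finset.prod_image (fun a _ b _ h => he_inj h)]
    rw [hbi, hpr] at h2
    exact h2
  have hsum : (∑' m, μ (A m)) = ∞ := by
    refine top_le_iff.mp ?_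
    have hk0 : ((k : ENNReal))⁻¹ ≠ 0 := by
      simp [ENNReal.inv_ne_zero]
    calc (⊤ : ENNReal) = ∑' _ : ℕ, ((k : ENNReal))⁻¹ :=
          (ENNReal.tsum_const_eq_top_of_ne_zero hk0).symm
      _ ≤ ∑' m, μ (A m) := by
          refine ENNReal.tsum_le_tsum fun m => ?_
          rw [← h_unif (e m) a₀]
          exact measure_mono (fun S hS => by
            simp only [Set.mem_setOf_eq] at hS
            simp only [hA, Set.mem_preimage, hS]
            exact ha₀)
  have hls := measure_limsup_eq_one hAmeas hiIndep hsum
  have hsub : {S : ℕ → Fin k | {n | g n = true ∧ S n ∈ Γ}.Finite} ⊆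
      (Filter.limsup A Filter.atTop)ᶜ := by
    intro S hS hlim
    rw [Filter.mem_limsup_iff_frequently_mem] at hlim
    have hinf : {m | S ∈ A m}.Infinite := Nat.frequently_atTop_iff_infinite.mp hlim
    have himg : (e '' {m | S ∈ A m}).Infinite := hinf.image (he_inj.injOn)
    have : {n | g n = true ∧ S n ∈ Γ}.Infinite := by
      refine himg.mono ?_
      rintro n ⟨m, hm, rfl⟩
      exact ⟨he_g m, hm⟩
    exact this hS
  refine le_antisymm ?_ (zero_le)
  calc μ {S : ℕ → Fin k | {n | g n = true ∧ S n ∈ Γ}.Finite}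
      ≤ μ (Filter.limsup A Filter.atTop)ᶜ := measure_mono hsub
    _ = 0 := by
        rw [measure_compl (MeasurableSet.measurableSet_limsup hAmeas) (measure_ne_top μ _), hls, measure_univ,
          tsub_self]

theorem ae_computably_unpredictable (k : ℕ) (hk : 2 ≤ k)
    (μ : Measure (ℕ → Fin k)) [IsProbabilityMeasure μ]
    (h_indep : iIndepFun (fun n (S : ℕ → Fin k) => S n) μ)
    (h_unif : ∀ (n : ℕ) (a : Fin k), μ {S | S n = a} = ((k : ENNReal))⁻¹) :
    μ {S : ℕ → Fin k |
        ∀ Γ : Set (Fin k), Γ.Nonempty → Γ ≠ Set.univ →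
          ∀ g : ℕ → Bool, Computable g → {n | g n = true}.Infinite →
            {n | g n = true ∧ S n ∈ Γ}.Infinite} = 1 := by
  classical
  set Good := {S : ℕ → Fin k |
      ∀ Γ : Set (Fin k), Γ.Nonempty → Γ ≠ Set.univ →
        ∀ g : ℕ → Bool, Computable g → {n | g n = true}.Infinite →
          {n | g n = true ∧ S n ∈ Γ}.Infinite} with hGood
  set N : Set (ℕ → Fin k) := ⋃ (Γ : Set (Fin k)), ⋃ g ∈ {g : ℕ → Bool | Computable g},
      {S : ℕ → Fin k | Γ.Nonempty ∧ {n | g n = true}.Infinite ∧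
        {n | g n = true ∧ S n ∈ Γ}.Finite} with hN
  have hNnull : μ N = 0 := by
    refine measure_iUnion_null fun Γ => ?_
    refine (measure_biUnion_null_iff countable_setOf_computable).mpr fun g hg => ?_
    by_cases h1 : Γ.Nonempty ∧ {n | g n = true}.Infinite
    · exact measure_mono_null (fun S hS => hS.2.2)
        (bad_null k hk μ h_indep h_unif Γ h1.1 g h1.2)
    · have : {S : ℕ → Fin k | Γ.Nonempty ∧ {n | g n = true}.Infinite ∧
          {n | g n = true ∧ S n ∈ Γ}.Finite} = ∅ := by
        ext S; simp only [Set.mem_setOf_eq, Set.mem_empty_iff_false, iff_false]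
        intro hS; exact h1 ⟨hS.1, hS.2.1⟩
      rw [this, measure_empty]
  have hGc : Goodᶜ ⊆ N := by
    intro S hS
    simp only [hGood, Set.mem_compl_iff, Set.mem_setOf_eq] at hS
    push_neg at hS
    obtain ⟨Γ, hne, _, g, hcomp, hginf, hfin⟩ := hS
    simp only [hN, Set.mem_iUnion, Set.mem_setOf_eq]
    exact ⟨Γ, g, hcomp, hne, hginf, hfin⟩
  have h1 : (1 : ENNReal) ≤ μ Good := by
    have huniv : (Set.univ : Set (ℕ → Fin k)) ⊆ N ∪ Good := fun S _ =>
      (em (S ∈ Good)).elim Or.inr fun h => Or.inl (hGc h)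
    calc (1 : ENNReal) = μ Set.univ := measure_univ.symm
      _ ≤ μ (N ∪ Good) := measure_mono huniv
      _ ≤ μ N + μ Good := measure_union_le _ _
      _ = μ Good := by rw [hNnull, zero_add]
  exact le_antisymm prob_le_one h1
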